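/- Let U be an infinite set with card U = τ, let V be a valuation ring with value group Γ satisfying card Γ ≤ τ, and let λ be a limit ordinal with card λ ≤ τ. Let 𝒰 be an ultrafilter on U such that every system of polynomial equations of cardinality ≤ τ with coefficients in Ṽ = Π_𝒰 V has a solution in Ṽ whenever all its finite subsystems do, and let V̄ = Ṽ/∩_{z∈V,z≠0} z·Ṽ be the separation of the ultrapower. Then every pseudo convergent sequence v̄ = (v̄_i)_{i<λ} of elements of V has a pseudo limit in V̄. -/

import Mathlib

/-!
Common definitions for formalizing "Immediate extensions of valuation rings
and ultrapowers" (D. Popescu).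

In a valuation ring (or any commutative ring, via divisibility) we encode the
comparison of values: `val a < val b` iff `a ∣ b` and `¬ b ∣ a`, and
`val a = val b` iff `a ∣ b ∧ b ∣ a`.
-/

universe u v

open Filter

/-- `val a < val b`, expressed via divisibility. -/
def ValLT {R : Type*} [CommRing R] (a b : R) : Prop := a ∣ b ∧ ¬ b ∣ a

/-- `val a = val b`, expressed via divisibility. -/
def ValEq {R : Type*} [CommRing R] (a b : R) : Prop := a ∣ b ∧ b ∣ a

/-- A sequence indexed by the ordinals `< lam` is pseudo convergent if
`val (v i - v i') < val (v i' - v i'')` for all `i < i' < i''`. -/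
def IsPseudoConvergent {R : Type*} [CommRing R] {lam : Ordinal.{v}}
    (seq : Set.Iio lam → R) : Prop :=
  ∀ i i' i'' : Set.Iio lam, i < i' → i' < i'' →
    ValLT (seq i - seq i') (seq i' - seq i'')

/-- `z` is a pseudo limit of the sequence `seq` if
`val (z - v i) < val (z - v i')` for all `i < i'`. -/
def IsPseudoLimit {R : Type*} [CommRing R] {lam : Ordinal.{v}}
    (seq : Set.Iio lam → R) (z : R) : Prop :=
  ∀ i i' : Set.Iio lam, i < i' → ValLT (z - seq i) (z - seq i')

/-- A pseudo convergent sequence is algebraic if some polynomial `f`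
satisfies `val (f (v i)) < val (f (v i'))` for all large enough `i < i'`. -/
def IsAlgebraicSeq {R : Type*} [CommRing R] {lam : Ordinal.{v}}
    (seq : Set.Iio lam → R) : Prop :=
  ∃ f : Polynomial R, ∃ i₀ : Set.Iio lam, ∀ i i' : Set.Iio lam,
    i₀ ≤ i → i < i' →
      ValLT (Polynomial.eval (seq i) f) (Polynomial.eval (seq i') f)

/-- A pseudo convergent sequence is transcendental if every polynomial `f`
satisfies `val (f (v i)) = val (f (v i'))` for all large enough `i < i'`. -/
def IsTranscendentalSeq {R : Type*} [CommRing R] {lam : Ordinal.{v}}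
    (seq : Set.Iio lam → R) : Prop :=
  ∀ f : Polynomial R, ∃ i₀ : Set.Iio lam, ∀ i i' : Set.Iio lam,
    i₀ ≤ i → i < i' →
      ValEq (Polynomial.eval (seq i) f) (Polynomial.eval (seq i') f)

/-- A sequence is fundamental if for every `γ` in the value group (the positive
part being cofinal, `γ` is represented by a nonzero element `z` of the ring)
there exist `i < i'` with `val (v i - v i') > val z`. -/
def IsFundamentalSeq {R : Type*} [CommRing R] {lam : Ordinal.{v}}
    (seq : Set.Iio lam → R) : Prop :=
  ∀ z : R, z ≠ 0 → ∃ i i' : Set.Iio lam, i < i' ∧ ValLT z (seq i - seq i')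

/-- An extension of valuation rings `f : V →+* V'` is immediate if it is
injective and local and induces isomorphisms on value groups (equivalently,
as `f` is local and injective, the value group map is onto) and on residue
fields (equivalently, the residue map is onto). -/
structure IsImmediate {V V' : Type*} [CommRing V] [CommRing V'] (f : V →+* V') : Prop where
  injective : Function.Injective f
  isLocal : ∀ a : V, IsUnit (f a) → IsUnit a
  value_surj : ∀ x : V', ∃ a : V, ValEq (f a) x
  residue_surj : ∀ x : V', ∃ a : V, ¬ IsUnit (x - f a)

/-- A valuation ring is complete (with respect to the valuation topology) iff
every fundamental pseudo convergent sequence has a (pseudo) limit. -/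
def IsCompleteValRing (R : Type v) [CommRing R] : Prop :=
  ∀ lam : Ordinal.{v}, Order.IsSuccLimit lam → ∀ seq : Set.Iio lam → R,
    IsPseudoConvergent seq → IsFundamentalSeq seq → ∃ z : R, IsPseudoLimit seq z

/-- `h : V →+* Vh` presents `Vh` as the completion of `V` (with respect to the
valuation topology): it is an immediate extension, `Vh` is complete, and `V`
is dense in `Vh`. -/
structure IsValuationCompletion {V : Type*} {Vh : Type v} [CommRing V] [CommRing Vh]
    (h : V →+* Vh) : Prop where
  immediate : IsImmediate h
  complete : IsCompleteValRing Vh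
  dense : ∀ x : Vh, ∀ z : V, z ≠ 0 → ∃ a : V, ValLT (h z) (x - h a)

/-- A field extension `g : K →+* L` is separable iff `M ⊗[K] L` is reduced for
every field extension `M` of `K` (MacLane's criterion). -/
def IsSeparableFieldHom {K L : Type u} [Field K] [Field L] (g : K →+* L) : Prop :=
  ∀ (M : Type u) [Field M] (φ : K →+* M),
    letI : Algebra K L := g.toAlgebra
    letI : Algebra K M := φ.toAlgebra
    IsReduced (TensorProduct K M L)

/-- An injective extension of domains is separable if the induced extension of
fraction fields is separable. -/
def IsSeparableDomainExt {A B : Type u} [CommRing A] [IsDomain A] [CommRing B] [IsDomain B]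
    (f : A →+* B) : Prop :=
  ∃ g : FractionRing A →+* FractionRing B,
    (∀ a : A, g (algebraMap A (FractionRing A) a) = algebraMap B (FractionRing B) (f a)) ∧
    IsSeparableFieldHom g

/-- The ultrapower `Ṽ = Π_𝒰 V` of `V` with respect to the ultrafilter `𝒰` on `U`. -/
abbrev Ultrapower (U : Type u) (𝒰 : Ultrafilter U) (V : Type u) : Type u :=
  Filter.Germ (𝒰 : Filter U) V

/-- The canonical (diagonal) embedding `V → Ṽ`. -/
noncomputable def germConstHom (U : Type u) (𝒰 : Ultrafilter U) (V : Type u) [CommRing V] :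
    V →+* Ultrapower U 𝒰 V :=
  (Filter.Germ.coeRingHom (𝒰 : Filter U)).comp (Pi.constRingHom U V)

/-- The ideal `q = ⋂_{z ∈ V, z ≠ 0} z Ṽ` of the ultrapower. -/
noncomputable def sepIdeal (U : Type u) (𝒰 : Ultrafilter U) (V : Type u) [CommRing V] :
    Ideal (Ultrapower U 𝒰 V) :=
  ⨅ z : {z : V // z ≠ 0}, Ideal.span {germConstHom U 𝒰 V z.1}

/-- The separation `V̄ = Ṽ / q` of the ultrapower. -/
abbrev SepUltrapower (U : Type u) (𝒰 : Ultrafilter U) (V : Type u) [CommRing V] : Type u :=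
  Ultrapower U 𝒰 V ⧸ sepIdeal U 𝒰 V

/-- The canonical map `V → V̄`. -/
noncomputable def barConstHom (U : Type u) (𝒰 : Ultrafilter U) (V : Type u) [CommRing V] :
    V →+* SepUltrapower U 𝒰 V :=
  (Ideal.Quotient.mk (sepIdeal U 𝒰 V)).comp (germConstHom U 𝒰 V)

/-- `𝒰` is such that any system of polynomial equations of cardinality
`≤ card U` with coefficients in the ultrapower `Ṽ` has a solution in `Ṽ`
whenever every finite subsystem has one. -/
def SaturatedUltrafilter (U : Type u) (𝒰 : Ultrafilter U) (V : Type u) [CommRing V] : Prop :=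
  ∀ (I J : Type u) (g : I → MvPolynomial J (Ultrapower U 𝒰 V)),
    Cardinal.mk I ≤ Cardinal.mk U →
    (∀ s : Finset I, ∃ x : J → Ultrapower U 𝒰 V, ∀ i ∈ s, MvPolynomial.eval x (g i) = 0) →
    ∃ x : J → Ultrapower U 𝒰 V, ∀ i : I, MvPolynomial.eval x (g i) = 0

/-- A factorization of `w : B →+* V'` through a smooth `V`-algebra `C`. -/
structure SmoothFactorization (V B V' : Type u) [CommRing V] [CommRing B] [Algebra V B]
    [CommRing V'] (f : V →+* V') (w : B →+* V') : Type (u + 1) where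
  C : Type u
  [instCommRing : CommRing C]
  [instAlgebra : Algebra V C]
  smooth : Algebra.Smooth V C
  p : B →+* C
  q : C →+* V'
  hp : p.comp (algebraMap V B) = algebraMap V C
  hq : q.comp (algebraMap V C) = f
  hqp : q.comp p = w

/-- `V'` is a filtered direct limit of smooth `V`-algebras: every `V`-morphism
from a finitely presented `V`-algebra to `V'` factors through a smooth
`V`-algebra (Lazard-style characterization of filtered colimits). -/
def IsFilteredColimitOfSmooth {V V' : Type u} [CommRing V] [CommRing V'] (f : V →+* V') : Prop :=
  ∀ (B : Type u) [CommRing B] [Algebra V B], Algebra.FinitePresentation V B →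
    ∀ w : B →+* V', w.comp (algebraMap V B) = f →
      Nonempty (SmoothFactorization V B V' f w)

section Aux

variable {U : Type u} {𝒰 : Ultrafilter U} {V : Type u} [CommRing V]

lemma germConstHom_apply (a : V) :
    germConstHom U 𝒰 V a = ((fun _ => a : U → V) : Filter.Germ (𝒰 : Filter U) V) := rfl

/-- If a germ-level divisibility holds pointwise on a set of the ultrafilter, it holds. -/
lemma germ_dvd_of_eventually {f g : U → V}
    (h : ∀ᶠ u in (𝒰 : Filter U), f u ∣ g u) :
    (f : Filter.Germ (𝒰 : Filter U) V) ∣ (g : Filter.Germ (𝒰 : Filter U) V) := by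
  classical
  refine ⟨((fun u => if hu : f u ∣ g u then hu.choose else 0 : U → V) :
    Filter.Germ (𝒰 : Filter U) V), ?_⟩
  rw [← Filter.Germ.coe_mul, Filter.Germ.coe_eq]
  filter_upwards [h] with u hu
  simp only [Pi.mul_apply, dif_pos hu]
  exact hu.choose_spec

/-- Divisibility is total in the ultrapower of a valuation ring. -/
lemma ultrapower_dvd_total [IsDomain V] [ValuationRing V]
    (a b : Ultrapower U 𝒰 V) : a ∣ b ∨ b ∣ a := by
  induction a using Filter.Germ.inductionOn with
  | h f =>
  induction b using Filter.Germ.inductionOn with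
  | h g =>
  rcases Ultrafilter.eventually_or.mp
      (Filter.Eventually.of_forall (f := 𝒰) fun u => ValuationRing.dvd_total (f u) (g u)) with h | h
  · exact Or.inl (germ_dvd_of_eventually h)
  · exact Or.inr (germ_dvd_of_eventually h)

/-- Cancellation against a nonzero constant in the ultrapower. -/
lemma germConst_mul_eq_zero [IsDomain V] {a : V} (ha : a ≠ 0)
    {x : Ultrapower U 𝒰 V} (h : germConstHom U 𝒰 V a * x = 0) : x = 0 := by
  induction x using Filter.Germ.inductionOn with
  | h g =>
  rw [germConstHom_apply, ← Filter.Germ.coe_mul] at h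
  have h0 : ((fun _ => a : U → V) * g) =ᶠ[(𝒰 : Filter U)] (0 : U → V) := by
    rw [← Filter.Germ.coe_zero] at h
    exact Filter.Germ.coe_eq.mp h
  have : g =ᶠ[(𝒰 : Filter U)] (0 : U → V) := by
    filter_upwards [h0] with u hu
    have : a * g u = 0 := hu
    rcases mul_eq_zero.mp this with h' | h'
    · exact absurd h' ha
    · exact h'
  rw [← Filter.Germ.coe_zero, Filter.Germ.coe_eq]
  exact this

/-- A constant that is a unit in the ultrapower is a unit. -/
lemma isUnit_of_germConst_isUnit {c : V} (h : IsUnit (germConstHom U 𝒰 V c)) :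
    IsUnit c := by
  obtain ⟨d, hd⟩ := h.exists_right_inv
  induction d using Filter.Germ.inductionOn with
  | h g =>
  rw [germConstHom_apply, ← Filter.Germ.coe_mul, ← Filter.Germ.coe_one,
    Filter.Germ.coe_eq] at hd
  obtain ⟨u, hu⟩ := hd.exists
  exact IsUnit.of_mul_eq_one (a := c) (g u) hu

/-- Strict value inequalities between elements of `V` transfer to the separated
ultrapower. -/
lemma not_dvd_barConst [IsDomain V] {a b : V} (ha : a ≠ 0) (hb : b ≠ 0)
    (hab : a ∣ b) (hba : ¬ b ∣ a) :
    ¬ barConstHom U 𝒰 V b ∣ barConstHom U 𝒰 V a := by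
  intro ⟨t', ht'⟩
  obtain ⟨t, rfl⟩ := Ideal.Quotient.mk_surjective t'
  obtain ⟨c, hc⟩ := hab
  have hcu : ¬ IsUnit c := by
    intro hcu
    obtain ⟨d, hd⟩ := hcu.exists_right_inv
    exact hba ⟨d, by rw [hc, mul_assoc, hd, mul_one]⟩
  have hmem : germConstHom U 𝒰 V a - germConstHom U 𝒰 V b * t ∈ sepIdeal U 𝒰 V := by
    rw [← Ideal.Quotient.eq_zero_iff_mem]
    simp only [map_sub, map_mul]
    rw [show (Ideal.Quotient.mk (sepIdeal U 𝒰 V)) (germConstHom U 𝒰 V a)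
        = barConstHom U 𝒰 V a from rfl,
      show (Ideal.Quotient.mk (sepIdeal U 𝒰 V)) (germConstHom U 𝒰 V b)
        = barConstHom U 𝒰 V b from rfl, ht', sub_self]
  have hmem2 : germConstHom U 𝒰 V a - germConstHom U 𝒰 V b * t ∈
      Ideal.span {germConstHom U 𝒰 V (a * b)} :=
    (iInf_le (fun z : {z : V // z ≠ 0} => Ideal.span {germConstHom U 𝒰 V z.1})
      ⟨a * b, mul_ne_zero ha hb⟩) hmem
  obtain ⟨s, hs⟩ := Ideal.mem_span_singleton'.mp hmem2
  -- rewrite everything through the constant `a`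
  have key : germConstHom U 𝒰 V a *
      (1 - germConstHom U 𝒰 V c * t - s * germConstHom U 𝒰 V a * germConstHom U 𝒰 V c) = 0 := by
    have hb' : germConstHom U 𝒰 V b = germConstHom U 𝒰 V a * germConstHom U 𝒰 V c := by
      rw [← map_mul, ← hc]
    have hab' : germConstHom U 𝒰 V (a * b)
        = germConstHom U 𝒰 V a * (germConstHom U 𝒰 V a * germConstHom U 𝒰 V c) := by
      rw [← map_mul, ← map_mul, ← hc]
    rw [hb', hab'] at hs
    ring_nf
    ring_nf at hs
    linear_combination -hs
  have hzero := germConst_mul_eq_zero ha key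
  have : IsUnit (germConstHom U 𝒰 V c) := by
    refine IsUnit.of_mul_eq_one (t + s * germConstHom U 𝒰 V a) ?_
    have := sub_eq_zero.mp hzero
    linear_combination -this
  exact hcu (isUnit_of_germConst_isUnit this)

end Aux

/-- With `card Γ ≤ τ = card U`, `𝒰` an ultrafilter on `U` such
that `τ`-sized polynomial systems over `Ṽ` are solvable whenever finitely
solvable, and `lam` a limit ordinal with `card lam ≤ τ`, every pseudo
convergent sequence of elements of `V` indexed by `lam` has a pseudo limit in
the separation `V̄` of the ultrapower. -/
theorem stmt_3 (U : Type u) [Infinite U]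
    (V : Type u) [CommRing V] [IsDomain V] [ValuationRing V]
    (hΓ : Cardinal.mk (ValuationRing.ValueGroup V (FractionRing V)) ≤ Cardinal.mk U)
    (𝒰 : Ultrafilter U) (hsat : SaturatedUltrafilter U 𝒰 V)
    (lam : Ordinal.{u}) (hlam : Order.IsSuccLimit lam) (hcard : lam.card ≤ Cardinal.mk U)
    (v : Set.Iio lam → V) (hv : IsPseudoConvergent v) :
    ∃ z : SepUltrapower U 𝒰 V,
      IsPseudoLimit (fun i => barConstHom U 𝒰 V (v i)) z := by
  classical
  have hne : Nonempty (Set.Iio lam) := ⟨⟨0, hlam.pos⟩⟩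
  -- a surjection `σ : U → Set.Iio lam`
  have hmk : Cardinal.mk (Set.Iio lam) ≤ Cardinal.mk (ULift.{u+1} U) := by
    rw [Ordinal.mk_Iio_ordinal, Cardinal.mk_uLift]
    exact Cardinal.lift_le.mpr hcard
  obtain ⟨emb⟩ := (Cardinal.le_def _ _).mp hmk
  let σ : U → Set.Iio lam := fun u => Function.invFun (⇑emb) (ULift.up u)
  have hσ : Function.Surjective σ := by
    intro i
    refine ⟨(emb i).down, ?_⟩
    show Function.invFun (⇑emb) (ULift.up (emb i).down) = i
    rw [ULift.up_down]
    exact Function.leftInverse_invFun emb.injective i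
  -- nonvanishing of differences
  have hne0 : ∀ i i' : Set.Iio lam, i < i' → v i - v i' ≠ 0 := by
    intro i i' hii' h0
    have hi'' : Order.succ (i' : Ordinal) < lam := hlam.succ_lt i'.2
    obtain ⟨h1, h2⟩ := hv i i' ⟨Order.succ (i' : Ordinal), hi''⟩ hii'
      (Subtype.coe_lt_coe.mp (Order.lt_succ _))
    exact h2 (h0 ▸ dvd_zero _)
  set cg := germConstHom U 𝒰 V with hcgdef
  -- the polynomial system
  set g : U × U → MvPolynomial (Option (U × U)) (Ultrapower U 𝒰 V) := fun p =>
    if σ p.1 < σ p.2 then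
      MvPolynomial.X none - MvPolynomial.C (cg (v (σ p.2)))
        - MvPolynomial.C (cg (v (σ p.2) - v (σ p.1))) * MvPolynomial.X (some p)
    else 0 with hg
  have hI : Cardinal.mk (U × U) ≤ Cardinal.mk U := by
    rw [Cardinal.mk_prod, Cardinal.lift_id,
      Cardinal.mul_eq_self (Cardinal.aleph0_le_mk U)]
  have hfin : ∀ s : Finset (U × U), ∃ x : Option (U × U) → Ultrapower U 𝒰 V,
      ∀ p ∈ s, MvPolynomial.eval x (g p) = 0 := by
    intro s
    -- choose an upper bound for all second indices
    have hsuplt : s.sup (fun p => Order.succ ((σ p.2 : Ordinal))) < lam := by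
      refine (Finset.sup_lt_iff ?_).mpr fun p _ => hlam.succ_lt (σ p.2).2
      simpa using hlam.pos
    set m : Set.Iio lam := ⟨s.sup (fun p => Order.succ ((σ p.2 : Ordinal))), hsuplt⟩ with hmdef
    have hm : ∀ p ∈ s, σ p.2 ≤ m := by
      intro p hp
      exact Subtype.coe_le_coe.mp
        ((le_of_lt (Order.lt_succ _)).trans (Finset.le_sup (f := fun p => Order.succ ((σ p.2 : Ordinal))) hp))
    have hdvd : ∀ p ∈ s, σ p.1 < σ p.2 →
        (v (σ p.2) - v (σ p.1)) ∣ (v m - v (σ p.2)) := by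
      intro p hp hlt
      rcases eq_or_lt_of_le (hm p hp) with heq | hlt2
      · rw [← heq, sub_self]
        exact dvd_zero _
      · obtain ⟨h1, _⟩ := hv (σ p.1) (σ p.2) m hlt hlt2
        have h2 : -(v (σ p.1) - v (σ p.2)) ∣ -(v (σ p.2) - v m) :=
          neg_dvd.mpr (dvd_neg.mpr h1)
        simpa [neg_sub] using h2
    refine ⟨fun j => Option.elim j (cg (v m))
      (fun p => if h : (v (σ p.2) - v (σ p.1)) ∣ (v m - v (σ p.2)) then cg h.choose else 0), ?_⟩
    intro p hp
    by_cases hlt : σ p.1 < σ p.2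
    · have hd := hdvd p hp hlt
      simp only [hg, if_pos hlt, map_sub, map_mul, MvPolynomial.eval_X, MvPolynomial.eval_C,
        Option.elim_none, Option.elim_some, dif_pos hd]
      have hspec' := congrArg cg hd.choose_spec
      simp only [map_sub, map_mul] at hspec'
      linear_combination hspec'
    · simp [hg, if_neg hlt]
  obtain ⟨x, hx⟩ := hsat (U × U) (Option (U × U)) g hI hfin
  set zt := x none with hzt
  -- the key divisibility in the ultrapower
  have hkey : ∀ i i' : Set.Iio lam, i < i' → cg (v i' - v i) ∣ (zt - cg (v i')) := by
    intro i i' h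
    obtain ⟨u1, hu1⟩ := hσ i
    obtain ⟨u2, hu2⟩ := hσ i'
    have hx12 := hx (u1, u2)
    simp only [hg, hu1, hu2, h, if_true, map_sub, map_mul, MvPolynomial.eval_X,
      MvPolynomial.eval_C] at hx12
    exact ⟨x (some (u1, u2)), by rw [map_sub]; linear_combination hx12⟩
  refine ⟨Ideal.Quotient.mk _ zt, ?_⟩
  set π := Ideal.Quotient.mk (sepIdeal U 𝒰 V) with hπ
  have hbar : ∀ a : V, barConstHom U 𝒰 V a = π (cg a) := fun a => rfl
  have tot : ∀ a b : SepUltrapower U 𝒰 V, a ∣ b ∨ b ∣ a := by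
    intro a b
    obtain ⟨a', rfl⟩ := Ideal.Quotient.mk_surjective a
    obtain ⟨b', rfl⟩ := Ideal.Quotient.mk_surjective b
    rcases ultrapower_dvd_total a' b' with h | h
    · exact Or.inl (map_dvd _ h)
    · exact Or.inr (map_dvd _ h)
  intro i i' hii'
  set i'' : Set.Iio lam := ⟨Order.succ (i' : Ordinal), hlam.succ_lt i'.2⟩ with hi''
  have hi'lt : i' < i'' := Subtype.coe_lt_coe.mp (Order.lt_succ _)
  have D1 : π (cg (v i' - v i)) ∣ (π zt - π (cg (v i'))) := by
    simpa only [map_sub] using map_dvd π (hkey i i' hii')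
  have D2 : π (cg (v i'' - v i')) ∣ (π zt - π (cg (v i''))) := by
    simpa only [map_sub] using map_dvd π (hkey i' i'' hi'lt)
  have D2' : π (cg (v i'' - v i')) ∣ (π zt - π (cg (v i'))) := by
    have h3 : π zt - π (cg (v i')) =
        (π zt - π (cg (v i''))) + (π (cg (v i'')) - π (cg (v i'))) := by ring
    rw [h3]
    refine dvd_add D2 ?_
    rw [← map_sub π, ← map_sub cg]
  obtain ⟨hpc1, hpc2⟩ := hv i i' i'' hii' hi'lt
  have ha : v i - v i' ≠ 0 := hne0 i i' hii'
  have hb : v i' - v i'' ≠ 0 := hne0 i' i'' hi'lt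
  have N : ¬ barConstHom U 𝒰 V (v i' - v i'') ∣ barConstHom U 𝒰 V (v i - v i') :=
    not_dvd_barConst ha hb hpc1 hpc2
  have notH : ¬ (π zt - π (cg (v i'))) ∣ (π zt - π (cg (v i))) := by
    intro H
    have h5 := dvd_trans D2' H
    have h6 : π (cg (v i')) - π (cg (v i)) =
        (π zt - π (cg (v i))) - (π zt - π (cg (v i'))) := by ring
    have h7 : π (cg (v i'' - v i')) ∣ π (cg (v i')) - π (cg (v i)) :=
      h6 ▸ dvd_sub h5 D2'
    rw [← map_sub π, ← map_sub cg] at h7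
    apply N
    have h8 : barConstHom U 𝒰 V (v i' - v i'') = -(π (cg (v i'' - v i'))) := by
      rw [hbar, ← map_neg π, ← map_neg cg, neg_sub]
    have h9 : barConstHom U 𝒰 V (v i - v i') = -(π (cg (v i' - v i))) := by
      rw [hbar, ← map_neg π, ← map_neg cg, neg_sub]
    rw [h8, h9]
    exact neg_dvd.mpr (dvd_neg.mpr h7)
  have hgoal1 : (π zt - π (cg (v i))) ∣ (π zt - π (cg (v i'))) := by
    rcases tot (π zt - π (cg (v i))) (π zt - π (cg (v i'))) with h | h
    · exact h
    · exact absurd h notH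
  exact ⟨hgoal1, notH⟩
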